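/- Let N ≥ 1, let τ_1, ..., τ_N > 0 be real delays (not necessarily distinct), and let γ_{jR}, γ_{jL} ≥ 0 for j ∈ {1,...,N}. Set T_j = T[γ_{jR},γ_{jL},τ_j]. Suppose (a) γ_{jL}·γ_{lR} = 0 for all j, l ∈ {1,...,N}, and (b) τ_j = τ_l for all j ≠ l such that γ_{jR}·γ_{lR} ≠ 0 or γ_{jL}·γ_{lL} ≠ 0. Then for every pair j, l there exists κ_{jl} ∈ ℝ such that ⟨T_j f, T_l g⟩ = κ_{jl}·⟨f,g⟩ for all continuous compactly supported f, g : ℝ → ℂ. (This is the paper's Proposition 3: the quantum stochastic dynamics for semi-infinite waveguide-QED reduces to the Markovian case under these coupling and position conditions.) -/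

import Mathlib

open MeasureTheory ComplexConjugate

/-- The L² pairing ⟨f,g⟩ = ∫ conj(f t) · g t dt. -/
noncomputable def pairL2 (f g : ℝ → ℂ) : ℂ := ∫ t : ℝ, conj (f t) * g t

/-- The smeared semi-infinite-waveguide noise channel:
`(T[γR,γL,τ] f)(t) = √γR·f(t+τ) − √γL·f(t−τ)`. -/
noncomputable def Tchan (γR γL τ : ℝ) (f : ℝ → ℂ) : ℝ → ℂ :=
  fun t => (Real.sqrt γR : ℂ) * f (t + τ) - (Real.sqrt γL : ℂ) * f (t - τ)

lemma shift_pair_add (f g : ℝ → ℂ) (σ : ℝ) :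
    (∫ t : ℝ, conj (f (t + σ)) * g (t + σ)) = pairL2 f g := by
  simpa [pairL2] using MeasureTheory.integral_add_right_eq_self (fun t => conj (f t) * g t) σ

lemma shift_pair_sub (f g : ℝ → ℂ) (σ : ℝ) :
    (∫ t : ℝ, conj (f (t - σ)) * g (t - σ)) = pairL2 f g := by
  simpa [sub_eq_add_neg, pairL2] using
    MeasureTheory.integral_add_right_eq_self (fun t => conj (f t) * g t) (-σ)

lemma shift_int (f g : ℝ → ℂ) (hf : Continuous f) (hfs : HasCompactSupport f)
    (hg : Continuous g) (σ1 σ2 : ℝ) :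
    Integrable (fun t : ℝ => conj (f (t + σ1)) * g (t + σ2)) := by
  have hf1 : Continuous (fun t : ℝ => conj (f (t + σ1))) :=
    Complex.continuous_conj.comp (hf.comp (continuous_add_right σ1))
  have hfs1 : HasCompactSupport (fun t : ℝ => conj (f (t + σ1))) := by
    have h : HasCompactSupport (fun t : ℝ => f (t + σ1)) :=
      hfs.comp_homeomorph (Homeomorph.addRight σ1)
    exact h.comp_left (by simp)
  exact (hf1.mul (hg.comp (continuous_add_right σ2))).integrable_of_hasCompactSupport
    hfs1.mul_right

/-- Expansion of the smeared pairing into four shifted integrals. -/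
lemma pair_expand (a b c d τ1 τ2 : ℝ) (f g : ℝ → ℂ)
    (hf : Continuous f) (hfs : HasCompactSupport f)
    (hg : Continuous g) (hgs : HasCompactSupport g) :
    (∫ t : ℝ, conj ((a:ℂ) * f (t + τ1) - (b:ℂ) * f (t - τ1)) *
        ((c:ℂ) * g (t + τ2) - (d:ℂ) * g (t - τ2)))
      = (a*c : ℝ) * (∫ t : ℝ, conj (f (t + τ1)) * g (t + τ2))
        - (a*d : ℝ) * (∫ t : ℝ, conj (f (t + τ1)) * g (t - τ2))
        - (b*c : ℝ) * (∫ t : ℝ, conj (f (t - τ1)) * g (t + τ2))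
        + (b*d : ℝ) * (∫ t : ℝ, conj (f (t - τ1)) * g (t - τ2)) := by
  have h2 : ∀ σ1 σ2 : ℝ, Integrable (fun t : ℝ => conj (f (t + σ1)) * g (t + σ2)) :=
    shift_int f g hf hfs hg
  have hint : ∀ σ1 σ2 : ℝ, Integrable (fun t : ℝ => conj (f (t - σ1)) * g (t - σ2)) := by
    intro σ1 σ2
    simpa [sub_eq_add_neg] using h2 (-σ1) (-σ2)
  have hint' : ∀ σ1 σ2 : ℝ, Integrable (fun t : ℝ => conj (f (t + σ1)) * g (t - σ2)) := by
    intro σ1 σ2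
    simpa [sub_eq_add_neg] using h2 σ1 (-σ2)
  have hint'' : ∀ σ1 σ2 : ℝ, Integrable (fun t : ℝ => conj (f (t - σ1)) * g (t + σ2)) := by
    intro σ1 σ2
    simpa [sub_eq_add_neg] using h2 (-σ1) σ2
  have i1 := (h2 τ1 τ2).const_mul ((a*c : ℝ) : ℂ)
  have i2 := (hint' τ1 τ2).const_mul ((a*d : ℝ) : ℂ)
  have i3 := (hint'' τ1 τ2).const_mul ((b*c : ℝ) : ℂ)
  have i4 := (hint τ1 τ2).const_mul ((b*d : ℝ) : ℂ)
  have h1 : ∀ t : ℝ,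
      conj ((a:ℂ) * f (t + τ1) - (b:ℂ) * f (t - τ1)) *
        ((c:ℂ) * g (t + τ2) - (d:ℂ) * g (t - τ2))
      = ((a*c : ℝ) : ℂ) * (conj (f (t + τ1)) * g (t + τ2))
        - ((a*d : ℝ) : ℂ) * (conj (f (t + τ1)) * g (t - τ2))
        - ((b*c : ℝ) : ℂ) * (conj (f (t - τ1)) * g (t + τ2))
        + ((b*d : ℝ) : ℂ) * (conj (f (t - τ1)) * g (t - τ2)) := by
    intro t
    simp only [map_sub, map_mul, Complex.conj_ofReal]
    push_cast
    ring
  have i12 : Integrable (fun t : ℝ =>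
      ((a*c : ℝ) : ℂ) * (conj (f (t + τ1)) * g (t + τ2))
        - ((a*d : ℝ) : ℂ) * (conj (f (t + τ1)) * g (t - τ2))) := i1.sub i2
  have i123 : Integrable (fun t : ℝ =>
      ((a*c : ℝ) : ℂ) * (conj (f (t + τ1)) * g (t + τ2))
        - ((a*d : ℝ) : ℂ) * (conj (f (t + τ1)) * g (t - τ2))
        - ((b*c : ℝ) : ℂ) * (conj (f (t - τ1)) * g (t + τ2))) := i12.sub i3
  calc (∫ t : ℝ, conj ((a:ℂ) * f (t + τ1) - (b:ℂ) * f (t - τ1)) *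
        ((c:ℂ) * g (t + τ2) - (d:ℂ) * g (t - τ2)))
      = ∫ t : ℝ, (((a*c : ℝ) : ℂ) * (conj (f (t + τ1)) * g (t + τ2))
        - ((a*d : ℝ) : ℂ) * (conj (f (t + τ1)) * g (t - τ2))
        - ((b*c : ℝ) : ℂ) * (conj (f (t - τ1)) * g (t + τ2))
        + ((b*d : ℝ) : ℂ) * (conj (f (t - τ1)) * g (t - τ2))) := by
        exact integral_congr_ae (Filter.Eventually.of_forall h1)
    _ = _ := by
        rw [MeasureTheory.integral_add i123 i4, MeasureTheory.integral_sub i12 i3,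
          MeasureTheory.integral_sub i1 i2, MeasureTheory.integral_const_mul,
          MeasureTheory.integral_const_mul, MeasureTheory.integral_const_mul,
          MeasureTheory.integral_const_mul]

theorem stmt_6 (N : ℕ) (hN : 1 ≤ N) (τ γR γL : Fin N → ℝ)
    (hτpos : ∀ j, 0 < τ j)
    (hγR : ∀ j, 0 ≤ γR j) (hγL : ∀ j, 0 ≤ γL j)
    (ha : ∀ j l : Fin N, γL j * γR l = 0)
    (hb : ∀ j l : Fin N, j ≠ l → (γR j * γR l ≠ 0 ∨ γL j * γL l ≠ 0) → τ j = τ l) :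
    ∀ j l : Fin N, ∃ κ : ℝ,
      ∀ f g : ℝ → ℂ, Continuous f → HasCompactSupport f →
        Continuous g → HasCompactSupport g →
          pairL2 (Tchan (γR j) (γL j) (τ j) f) (Tchan (γR l) (γL l) (τ l) g) =
            (κ : ℂ) * pairL2 f g := by
  intro j l
  refine ⟨Real.sqrt (γR j) * Real.sqrt (γR l) + Real.sqrt (γL j) * Real.sqrt (γL l), ?_⟩
  intro f g hf hfs hg hgs
  have hAD : Real.sqrt (γR j) * Real.sqrt (γL l) = 0 := by
    rw [← Real.sqrt_mul (hγR j), show γR j * γL l = γL l * γR j by ring, ha l j,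
      Real.sqrt_zero]
  have hBC : Real.sqrt (γL j) * Real.sqrt (γR l) = 0 := by
    rw [← Real.sqrt_mul (hγL j), ha j l, Real.sqrt_zero]
  have hexp := pair_expand (Real.sqrt (γR j)) (Real.sqrt (γL j))
    (Real.sqrt (γR l)) (Real.sqrt (γL l)) (τ j) (τ l) f g hf hfs hg hgs
  have hlhs : pairL2 (Tchan (γR j) (γL j) (τ j) f) (Tchan (γR l) (γL l) (τ l) g)
      = (∫ t : ℝ, conj ((Real.sqrt (γR j):ℂ) * f (t + τ j)
          - (Real.sqrt (γL j):ℂ) * f (t - τ j)) *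
          ((Real.sqrt (γR l):ℂ) * g (t + τ l) - (Real.sqrt (γL l):ℂ) * g (t - τ l))) := rfl
  rw [hlhs, hexp, hAD, hBC]
  -- the R-diagonal term
  have hR : ((Real.sqrt (γR j) * Real.sqrt (γR l) : ℝ) : ℂ) *
      (∫ t : ℝ, conj (f (t + τ j)) * g (t + τ l))
      = ((Real.sqrt (γR j) * Real.sqrt (γR l) : ℝ) : ℂ) * pairL2 f g := by
    by_cases hjl : τ j = τ l
    · rw [hjl, shift_pair_add f g (τ l)]
    · have hjne : j ≠ l := fun h => hjl (by rw [h])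
      by_cases hz : γR j * γR l = 0
      · have h0 : Real.sqrt (γR j) * Real.sqrt (γR l) = 0 := by
          rw [← Real.sqrt_mul (hγR j), hz, Real.sqrt_zero]
        rw [h0]; push_cast; ring
      · exact absurd (hb j l hjne (Or.inl hz)) hjl
  -- the L-diagonal term
  have hL : ((Real.sqrt (γL j) * Real.sqrt (γL l) : ℝ) : ℂ) *
      (∫ t : ℝ, conj (f (t - τ j)) * g (t - τ l))
      = ((Real.sqrt (γL j) * Real.sqrt (γL l) : ℝ) : ℂ) * pairL2 f g := by
    by_cases hjl : τ j = τ l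
    · rw [hjl, shift_pair_sub f g (τ l)]
    · have hjne : j ≠ l := fun h => hjl (by rw [h])
      by_cases hz : γL j * γL l = 0
      · have h0 : Real.sqrt (γL j) * Real.sqrt (γL l) = 0 := by
          rw [← Real.sqrt_mul (hγL j), hz, Real.sqrt_zero]
        rw [h0]; push_cast; ring
      · exact absurd (hb j l hjne (Or.inr hz)) hjl
  rw [hR, hL]
  push_cast
  ring
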